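/- Let H be a real inner product space, x₀, z, v ∈ H, s ∈ [0, 1), t = arctan(s / (1 − s)), x_s = (1 − s)·x₀ + s·z, and λ = √(s² + (1 − s)²). Then ‖ ((1 − 2s)/λ)·x_s + ((1 − 2s + 2s²)/λ)·v − (cos(t)·z − sin(t)·x₀) ‖² = (s² + (1 − s)²) · ‖ v − (z − x₀) ‖². Hence the TrigFlow squared loss of the transformed prediction equals the flow-matching squared loss of the original prediction, rescaled by the factor s² + (1 − s)². -/

import Mathlib

open Real

/-- Let `H` be a real inner product space, `x₀, z, v ∈ H`, `s ∈ [0, 1)`,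
`t = arctan (s / (1 − s))`, `xs = (1 − s)·x₀ + s·z`, and `lam = √(s² + (1 − s)²)`. Then
the TrigFlow squared loss of the transformed prediction equals the flow-matching squared
loss of the original prediction, rescaled by the factor `s² + (1 − s)²`. -/
theorem trig_sq_loss_eq_rescaled_flow_sq_loss
    {H : Type*} [NormedAddCommGroup H] [InnerProductSpace ℝ H]
    (x₀ z v : H) (s : ℝ) (hs : s ∈ Set.Ico (0 : ℝ) 1)
    (t : ℝ) (ht : t = arctan (s / (1 - s)))
    (xs : H) (hxs : xs = (1 - s) • x₀ + s • z)
    (lam : ℝ) (hlam : lam = Real.sqrt (s ^ 2 + (1 - s) ^ 2)) :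
    ‖((1 - 2 * s) / lam) • xs + ((1 - 2 * s + 2 * s ^ 2) / lam) • v -
        (cos t • z - sin t • x₀)‖ ^ 2 =
      (s ^ 2 + (1 - s) ^ 2) * ‖v - (z - x₀)‖ ^ 2 := by
  obtain ⟨hs0, hs1⟩ := hs
  have h1s : (0:ℝ) < 1 - s := by linarith
  have hq : (0:ℝ) < s ^ 2 + (1 - s) ^ 2 := by positivity
  have hlampos : 0 < lam := hlam ▸ Real.sqrt_pos.mpr hq
  have hlamsq : lam ^ 2 = s ^ 2 + (1 - s) ^ 2 := by
    rw [hlam, Real.sq_sqrt hq.le]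
  have hden : Real.sqrt (1 + (s / (1 - s)) ^ 2) = lam / (1 - s) := by
    have : 1 + (s / (1 - s)) ^ 2 = (s ^ 2 + (1 - s) ^ 2) / (1 - s) ^ 2 := by
      field_simp; ring
    rw [this, Real.sqrt_div' _ (by positivity), hlam]
    · rw [Real.sqrt_sq h1s.le]
    all_goals positivity
  have hcos : cos t = (1 - s) / lam := by
    rw [ht, Real.cos_arctan, hden]
    field_simp
  have hsin : sin t = s / lam := by
    rw [ht, Real.sin_arctan, hden]
    field_simp
  have key : ((1 - 2 * s) / lam) • xs + ((1 - 2 * s + 2 * s ^ 2) / lam) • v -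
      (cos t • z - sin t • x₀) = ((1 - 2 * s + 2 * s ^ 2) / lam) • (v - (z - x₀)) := by
    rw [hxs, hcos, hsin, smul_add, smul_smul, smul_smul, smul_sub, smul_sub]
    rw [show (1 - 2 * s) / lam * (1 - s) = (1 - 2*s+2*s^2)/lam - s/lam by
          field_simp; ring,
        show (1 - 2 * s) / lam * s = (1-s)/lam - (1 - 2*s+2*s^2)/lam by
          field_simp; ring]
    module
  have h2 : 1 - 2*s+2*s^2 = lam ^ 2 := by rw [hlamsq]; ring
  rw [key, norm_smul, mul_pow, ← hlamsq, Real.norm_eq_abs, sq_abs, h2]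
  field_simp
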